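/- Let c, α > 0, p ≥ 1, and (w_t)_{t=1}^T a sequence in ℝ^d. Define r_t(w) = c‖w‖^p / (α^p + Σ_{s=1}^t ‖w_s‖^p)^{1-1/p} when ‖w‖ ≤ ‖w_t‖ (and the Huber-like linear extension otherwise). Then Σ_{t=1}^T r_t(w_t) ≥ c(α^p + Σ_{t=1}^T ‖w_t‖^p)^{1/p} − cα. -/

import Mathlib

open Finset

/-- Lower bound branch of the Huber-like penalty evaluated at the iterates:
`Σ_{t=1}^T c‖w_t‖^p / (α^p + Σ_{s=1}^t ‖w_s‖^p)^{1-1/p} ≥ c(α^p + Σ_{t=1}^T ‖w_t‖^p)^{1/p} − cα`. -/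
theorem stmt8 {d : ℕ} (c α p : ℝ) (hc : 0 < c) (hα : 0 < α) (hp : 1 ≤ p)
    (T : ℕ) (hT : 1 ≤ T) (w : ℕ → EuclideanSpace ℝ (Fin d)) :
    c * (α ^ p + ∑ t ∈ Finset.Icc 1 T, ‖w t‖ ^ p) ^ (1 / p) - c * α ≤
      ∑ t ∈ Finset.Icc 1 T,
        c * ‖w t‖ ^ p / (α ^ p + ∑ s ∈ Finset.Icc 1 t, ‖w s‖ ^ p) ^ (1 - 1 / p) := by
  have hp0 : (0:ℝ) < p := lt_of_lt_of_le one_pos hp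
  have ha0 : ∀ t, (0:ℝ) ≤ ‖w t‖ ^ p := fun t => Real.rpow_nonneg (norm_nonneg _) p
  have hq1 : 1 / p ≤ 1 := by rw [div_le_one hp0]; exact hp
  have h1q : (0:ℝ) ≤ 1 - 1 / p := by linarith
  have hS : ∀ n : ℕ, (0:ℝ) < α ^ p + ∑ s ∈ Icc 1 n, ‖w s‖ ^ p := by
    intro n
    have h1 := Real.rpow_pos_of_pos hα p
    have h2 : (0:ℝ) ≤ ∑ s ∈ Icc 1 n, ‖w s‖ ^ p :=
      Finset.sum_nonneg fun s _ => ha0 s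
    linarith
  have hαp : (α ^ p) ^ (1/p : ℝ) = α := by
    rw [← Real.rpow_mul hα.le, mul_one_div, div_self hp0.ne', Real.rpow_one]
  have key : ∀ n : ℕ,
      c * (α ^ p + ∑ t ∈ Icc 1 n, ‖w t‖ ^ p) ^ (1 / p) - c * α ≤
        ∑ t ∈ Icc 1 n, c * ‖w t‖ ^ p /
          (α ^ p + ∑ s ∈ Icc 1 t, ‖w s‖ ^ p) ^ (1 - 1 / p) := by
    intro n
    induction n with
    | zero =>
      simp only [show Icc 1 0 = (∅ : Finset ℕ) from rfl, Finset.sum_empty, add_zero, hαp,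
        sub_self, le_refl]
    | succ n ih =>
      rw [Finset.sum_Icc_succ_top (Nat.succ_le_succ (Nat.zero_le n)),
          Finset.sum_Icc_succ_top (Nat.succ_le_succ (Nat.zero_le n)),
          Finset.sum_Icc_succ_top (Nat.succ_le_succ (Nat.zero_le n))]
      set B : ℝ := α ^ p + ∑ s ∈ Icc 1 n, ‖w s‖ ^ p with hB
      have hBpos : 0 < B := hS n
      set b : ℝ := ‖w (n + 1)‖ ^ p with hb
      have hbpos : 0 ≤ b := ha0 (n + 1)
      have hA : (0:ℝ) < B + b := by linarith
      have hApow : (0:ℝ) < (B + b) ^ (1 - 1/p : ℝ) := Real.rpow_pos_of_pos hA _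
      have hBB : B ^ (1/p : ℝ) * B ^ (1 - 1/p : ℝ) = B := by
        rw [← Real.rpow_add hBpos]; norm_num
      have hAA : (B + b) ^ (1/p : ℝ) * (B + b) ^ (1 - 1/p : ℝ) = B + b := by
        rw [← Real.rpow_add hA]; norm_num
      have hmono : B ^ (1 - 1/p : ℝ) ≤ (B + b) ^ (1 - 1/p : ℝ) :=
        Real.rpow_le_rpow hBpos.le (by linarith) h1q
      have h2 : B ≤ B ^ (1/p : ℝ) * (B + b) ^ (1 - 1/p : ℝ) := by
        calc B = B ^ (1/p : ℝ) * B ^ (1 - 1/p : ℝ) := hBB.symm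
        _ ≤ B ^ (1/p : ℝ) * (B + b) ^ (1 - 1/p : ℝ) :=
            mul_le_mul_of_nonneg_left hmono (Real.rpow_nonneg hBpos.le _)
      have hstep : c * (B + b) ^ (1/p : ℝ) - c * B ^ (1/p : ℝ) ≤
          c * b / (B + b) ^ (1 - 1/p : ℝ) := by
        rw [le_div_iff₀ hApow]
        have expand : (c * (B + b) ^ (1/p : ℝ) - c * B ^ (1/p : ℝ)) *
            (B + b) ^ (1 - 1/p : ℝ)
            = c * ((B + b) ^ (1/p : ℝ) * (B + b) ^ (1 - 1/p : ℝ))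
              - c * (B ^ (1/p : ℝ) * (B + b) ^ (1 - 1/p : ℝ)) := by ring
        rw [expand, hAA]
        nlinarith [mul_le_mul_of_nonneg_left h2 hc.le]
      have hassoc : α ^ p + ((∑ s ∈ Icc 1 n, ‖w s‖ ^ p) + b) = B + b := by
        rw [hB]; ring
      rw [hassoc]
      linarith [ih, hstep]
  exact key T
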